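/- Let X ∈ ℝ^{N×N} be symmetric positive semidefinite of rank r with eigenvalues λ₁ ≥ ⋯ ≥ λ_r > 0, let 1 ≤ k ≤ r, and assume λ_{k+1} ≤ λ_k/12. Suppose W_s ∈ ℝ^{N×k} has orthonormal columns that are eigenvectors of X with corresponding eigenvalues forming the diagonal of Λ_s = diag(λ_{s1},…,λ_{sk}), where λ_{s1} ≥ ⋯ ≥ λ_{sk} > 0 and λ_{sk} ≤ λ_{k+1}; suppose w* ∈ ℝ^N is a unit eigenvector of X with eigenvalue λ* ≥ λ_k satisfying w*ᵀW_s = 0; let Q ∈ O_k with last column q_k, and set U_s = W_s Λ_s^{1/2} Qᵀ and D = w* q_kᵀ. Then DᵀU_s = U_sᵀD = 0 (so D is horizontal at U_s), ‖D‖_F = 1, and (1/2)‖U_s Dᵀ + D U_sᵀ‖_F² + ⟨U_s U_sᵀ − X, DDᵀ⟩ ≤ −0.91 λ_k; consequently λ_min(hess g(U_s)) ≤ −0.91 λ_k. -/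
import Mathlib


open Matrix

/-- Frobenius norm of a real matrix. -/
noncomputable def frob {m n : Type*} [Fintype m] [Fintype n] (M : Matrix m n ℝ) : ℝ :=
  Real.sqrt (∑ i, ∑ j, (M i j) ^ 2)

/-- Trace (entrywise) inner product of two real matrices. -/
noncomputable def mip {m n : Type*} [Fintype m] [Fintype n] (A B : Matrix m n ℝ) : ℝ :=
  ∑ i, ∑ j, A i j * B i j

/-- The smallest eigenvalue of the Riemannian Hessian of the matrix-sensing population
risk at `U`, i.e. the infimum of the Hessian quadratic form over horizontal directions
of unit Frobenius norm. -/
noncomputable def hessMin {N k : ℕ} (X : Matrix (Fin N) (Fin N) ℝ)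
    (U : Matrix (Fin N) (Fin k) ℝ) : ℝ :=
  sInf {t : ℝ | ∃ D : Matrix (Fin N) (Fin k) ℝ, Dᵀ * U = Uᵀ * D ∧ frob D = 1 ∧
    t = (1 / 2) * frob (U * Dᵀ + D * Uᵀ) ^ 2 + mip (U * Uᵀ - X) (D * Dᵀ)}

lemma frob_nonneg {m n : Type*} [Fintype m] [Fintype n] (M : Matrix m n ℝ) : 0 ≤ frob M :=
  Real.sqrt_nonneg _

lemma frob_sq {m n : Type*} [Fintype m] [Fintype n] (M : Matrix m n ℝ) :
    frob M ^ 2 = ∑ i, ∑ j, (M i j) ^ 2 :=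
  Real.sq_sqrt (by positivity)

lemma mip_sq_le {m n : Type*} [Fintype m] [Fintype n] (A B : Matrix m n ℝ) :
    mip A B ^ 2 ≤ (∑ i, ∑ j, (A i j) ^ 2) * (∑ i, ∑ j, (B i j) ^ 2) := by
  have h := Finset.sum_mul_sq_le_sq_mul_sq Finset.univ
    (fun p : m × n => A p.1 p.2) (fun p : m × n => B p.1 p.2)
  simpa [mip, Fintype.sum_prod_type] using h

lemma neg_frob_le_mip {m n : Type*} [Fintype m] [Fintype n] (A B : Matrix m n ℝ) :
    -(frob A * frob B) ≤ mip A B := by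
  have h1 : |mip A B| ≤ frob A * frob B := by
    have := mip_sq_le A B
    have h2 : |mip A B| = Real.sqrt (mip A B ^ 2) := (Real.sqrt_sq_eq_abs _).symm
    rw [h2, frob, frob, ← Real.sqrt_mul (by positivity)]
    exact Real.sqrt_le_sqrt this
  linarith [neg_abs_le (mip A B)]

lemma frob_mul_transpose_le {m n : Type*} [Fintype m] [Fintype n] (D : Matrix m n ℝ) :
    frob (D * Dᵀ) ≤ frob D ^ 2 := by
  have h : ∑ i, ∑ l, ((D * Dᵀ) i l) ^ 2 ≤ (∑ i, ∑ j, (D i j) ^ 2) ^ 2 := by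
    have h1 : ∀ i l : m, ((D * Dᵀ) i l) ^ 2 ≤ (∑ j, (D i j) ^ 2) * (∑ j, (D l j) ^ 2) := by
      intro i l
      have := Finset.sum_mul_sq_le_sq_mul_sq Finset.univ (fun j => D i j) (fun j => D l j)
      simpa [Matrix.mul_apply] using this
    calc ∑ i, ∑ l, ((D * Dᵀ) i l) ^ 2
        ≤ ∑ i, ∑ l, (∑ j, (D i j) ^ 2) * (∑ j, (D l j) ^ 2) :=
          Finset.sum_le_sum fun i _ => Finset.sum_le_sum fun l _ => h1 i l
      _ = (∑ i, ∑ j, (D i j) ^ 2) ^ 2 := by rw [sq, Finset.sum_mul_sum]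
  have := Real.sqrt_le_sqrt h
  rw [frob, frob]
  calc Real.sqrt (∑ i, ∑ l, ((D * Dᵀ) i l) ^ 2)
      ≤ Real.sqrt ((∑ i, ∑ j, (D i j) ^ 2) ^ 2) := this
    _ = ∑ i, ∑ j, (D i j) ^ 2 := Real.sqrt_sq (by positivity)
    _ = Real.sqrt (∑ i, ∑ j, (D i j) ^ 2) ^ 2 := (Real.sq_sqrt (by positivity)).symm

lemma mip_eq_trace {m n : Type*} [Fintype m] [Fintype n] (A B : Matrix m n ℝ) :
    mip A B = Matrix.trace (Aᵀ * B) := by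
  simp only [Matrix.trace, Matrix.diag, Matrix.mul_apply, Matrix.transpose_apply, mip]
  exact Finset.sum_comm

lemma hess_bddBelow {N k : ℕ} (X : Matrix (Fin N) (Fin N) ℝ) (U : Matrix (Fin N) (Fin k) ℝ) :
    BddBelow {t : ℝ | ∃ D : Matrix (Fin N) (Fin k) ℝ, Dᵀ * U = Uᵀ * D ∧ frob D = 1 ∧
      t = (1 / 2) * frob (U * Dᵀ + D * Uᵀ) ^ 2 + mip (U * Uᵀ - X) (D * Dᵀ)} := by
  refine ⟨-(frob (U * Uᵀ - X)), fun t ht => ?_⟩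
  obtain ⟨E, -, hE1, rfl⟩ := ht
  have h1 : -(frob (U * Uᵀ - X) * frob (E * Eᵀ)) ≤ mip (U * Uᵀ - X) (E * Eᵀ) :=
    neg_frob_le_mip _ _
  have h2 : frob (E * Eᵀ) ≤ 1 := by
    have := frob_mul_transpose_le E; rw [hE1] at this; simpa using this
  have h3 : 0 ≤ frob (U * Uᵀ - X) := frob_nonneg _
  have h4 : 0 ≤ (1 / 2) * frob (U * Eᵀ + E * Uᵀ) ^ 2 := by positivity
  nlinarith [sq_nonneg (frob (U * Eᵀ + E * Uᵀ))]

theorem stmt_9 {N r k : ℕ} (hk1 : 1 ≤ k) (hkr : k ≤ r)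
    (W : Matrix (Fin N) (Fin r) ℝ) (lam : Fin r → ℝ)
    (hW : Wᵀ * W = 1) (hpos : ∀ i, 0 < lam i)
    (hdesc : ∀ i j : Fin r, i ≤ j → lam j ≤ lam i)
    (X : Matrix (Fin N) (Fin N) ℝ) (hX : X = W * diagonal lam * Wᵀ)
    (hgap : (if h : k < r then lam ⟨k, h⟩ else 0) ≤ lam ⟨k - 1, by omega⟩ / 12)
    (Ws : Matrix (Fin N) (Fin k) ℝ) (lams : Fin k → ℝ)
    (hWs : Wsᵀ * Ws = 1) (hlamspos : ∀ i, 0 < lams i)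
    (hlamsdesc : ∀ i j : Fin k, i ≤ j → lams j ≤ lams i)
    (hWseig : X * Ws = Ws * diagonal lams)
    (hlamsk : lams ⟨k - 1, by omega⟩ ≤ (if h : k < r then lam ⟨k, h⟩ else 0))
    (wstar : Fin N → ℝ) (lamstar : ℝ)
    (hwunit : ∑ i, wstar i ^ 2 = 1)
    (hweig : X.mulVec wstar = lamstar • wstar)
    (hlamstar : lam ⟨k - 1, by omega⟩ ≤ lamstar)
    (hworth : ∀ j, ∑ i, wstar i * Ws i j = 0)
    (Q : Matrix (Fin k) (Fin k) ℝ) (hQ : Qᵀ * Q = 1)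
    (Us : Matrix (Fin N) (Fin k) ℝ)
    (hUs : Us = Ws * diagonal (fun i => Real.sqrt (lams i)) * Qᵀ)
    (D : Matrix (Fin N) (Fin k) ℝ)
    (hDdef : D = Matrix.of fun i j => wstar i * Q j ⟨k - 1, by omega⟩) :
    Dᵀ * Us = 0 ∧ Usᵀ * D = 0 ∧ frob D = 1 ∧
    (1 / 2) * frob (Us * Dᵀ + D * Usᵀ) ^ 2 + mip (Us * Usᵀ - X) (D * Dᵀ) ≤
      -0.91 * lam ⟨k - 1, by omega⟩ ∧
    hessMin X Us ≤ -0.91 * lam ⟨k - 1, by omega⟩ := by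
  obtain ⟨kk, hkk⟩ : ∃ kk : Fin k, kk = (⟨k - 1, by omega⟩ : Fin k) := ⟨_, rfl⟩
  obtain ⟨kr, hkr'⟩ : ∃ kr : Fin r, kr = (⟨k - 1, by omega⟩ : Fin r) := ⟨_, rfl⟩
  rw [← hkk] at hlamsk hDdef
  rw [← hkr'] at hgap hlamstar ⊢
  -- basic orthonormality facts
  have hq : ∑ j, Q j kk ^ 2 = 1 := by
    have := congrFun (congrFun hQ kk) kk
    simpa [Matrix.mul_apply, sq, Matrix.one_apply] using this
  have hWsk : ∑ i, Ws i kk ^ 2 = 1 := by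
    have := congrFun (congrFun hWs kk) kk
    simpa [Matrix.mul_apply, sq, Matrix.one_apply] using this
  have hUsorth : ∀ a : Fin k, ∑ i, wstar i * Us i a = 0 := by
    intro a
    rw [hUs]
    have h1 : ∀ i, ((Ws * diagonal fun i => Real.sqrt (lams i)) * Qᵀ) i a
        = ∑ b, Ws i b * Real.sqrt (lams b) * Q a b := by
      intro i
      simp [Matrix.mul_apply, Matrix.transpose_apply, Matrix.diagonal_apply, Finset.mul_sum,
        mul_ite, mul_zero, ite_mul, zero_mul, Finset.sum_ite_eq, mul_assoc]
    simp_rw [h1, Finset.mul_sum]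
    rw [Finset.sum_comm]
    refine Finset.sum_eq_zero fun b _ => ?_
    have h2 : ∑ i, wstar i * (Ws i b * Real.sqrt (lams b) * Q a b)
        = (∑ i, wstar i * Ws i b) * (Real.sqrt (lams b) * Q a b) := by
      rw [Finset.sum_mul]
      exact Finset.sum_congr rfl fun i _ => by ring
    rw [h2, hworth b, zero_mul]
  have hUsq : ∀ i, ∑ j, Us i j * Q j kk = Real.sqrt (lams kk) * Ws i kk := by
    intro i
    rw [hUs]
    have h1 : ∀ j, ((Ws * diagonal fun i => Real.sqrt (lams i)) * Qᵀ) i j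
        = ∑ b, Ws i b * Real.sqrt (lams b) * Q j b := by
      intro j
      simp [Matrix.mul_apply, Matrix.transpose_apply, Matrix.diagonal_apply, Finset.mul_sum,
        mul_ite, mul_zero, ite_mul, zero_mul, Finset.sum_ite_eq, mul_assoc]
    have hQbk : ∀ b, ∑ j, Q j b * Q j kk = if b = kk then 1 else 0 := by
      intro b
      have := congrFun (congrFun hQ b) kk
      simpa [Matrix.mul_apply, Matrix.one_apply] using this
    simp_rw [h1, Finset.sum_mul]
    rw [Finset.sum_comm]
    have h2 : ∀ b, ∑ j, Ws i b * Real.sqrt (lams b) * Q j b * Q j kk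
        = (Ws i b * Real.sqrt (lams b)) * ∑ j, Q j b * Q j kk := by
      intro b; rw [Finset.mul_sum]; exact Finset.sum_congr rfl fun j _ => by ring
    simp_rw [h2, hQbk]
    simp [Finset.sum_ite_eq', mul_comm]
  -- (1) horizontality
  have hDU : Dᵀ * Us = 0 := by
    ext j l
    simp only [Matrix.mul_apply, Matrix.transpose_apply, hDdef, Matrix.of_apply,
      Matrix.zero_apply]
    have h : ∑ i, wstar i * Q j kk * Us i l = Q j kk * ∑ i, wstar i * Us i l := by
      rw [Finset.mul_sum]; exact Finset.sum_congr rfl fun i _ => by ring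
    rw [h, hUsorth, mul_zero]
  have hUD : Usᵀ * D = 0 := by
    have : Usᵀ * D = (Dᵀ * Us)ᵀ := by
      rw [Matrix.transpose_mul, Matrix.transpose_transpose]
    rw [this, hDU, Matrix.transpose_zero]
  -- (2) unit norm
  have hfrobD : frob D = 1 := by
    rw [frob]
    have h : ∀ i : Fin N, ∑ j, (D i j) ^ 2 = wstar i ^ 2 * ∑ j, Q j kk ^ 2 := by
      intro i
      rw [Finset.mul_sum]
      exact Finset.sum_congr rfl fun j _ => by rw [hDdef]; simp [Matrix.of_apply]; ring
    simp_rw [h, hq, mul_one, hwunit, Real.sqrt_one]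
  -- (3) value of the quadratic form
  have hlamkk0 : (0:ℝ) ≤ lams kk := (hlamspos kk).le
  have hssq : Real.sqrt (lams kk) ^ 2 = lams kk := Real.sq_sqrt hlamkk0
  have hEntry : ∀ i l, (Us * Dᵀ + D * Usᵀ) i l
      = Real.sqrt (lams kk) * (Ws i kk * wstar l + wstar i * Ws l kk) := by
    intro i l
    simp only [Matrix.add_apply, Matrix.mul_apply, Matrix.transpose_apply, hDdef,
      Matrix.of_apply]
    have e1 : ∑ j, Us i j * (wstar l * Q j kk) = wstar l * ∑ j, Us i j * Q j kk := by
      rw [Finset.mul_sum]; exact Finset.sum_congr rfl fun j _ => by ring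
    have e2 : ∑ j, (wstar i * Q j kk) * Us l j = wstar i * ∑ j, Us l j * Q j kk := by
      rw [Finset.mul_sum]; exact Finset.sum_congr rfl fun j _ => by ring
    rw [e1, e2, hUsq, hUsq]; ring
  have hterm1 : (1 / 2) * frob (Us * Dᵀ + D * Usᵀ) ^ 2 = lams kk := by
    rw [frob_sq]
    have expand : ∀ i l : Fin N,
        ((Us * Dᵀ + D * Usᵀ) i l) ^ 2
          = (lams kk * Ws i kk ^ 2) * wstar l ^ 2
            + ((2 * lams kk) * (wstar i * Ws i kk)) * (wstar l * Ws l kk)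
            + (lams kk * wstar i ^ 2) * Ws l kk ^ 2 := by
      intro i l
      rw [hEntry i l, mul_pow, hssq]
      ring
    simp_rw [expand, Finset.sum_add_distrib, ← Finset.mul_sum, hwunit, hworth, hWsk,
      mul_one, mul_zero, Finset.sum_const_zero, add_zero]
    rw [← Finset.mul_sum, ← Finset.mul_sum, hWsk, hwunit]
    ring
  -- entries of D * Dᵀ
  have hDDt : ∀ i l, (D * Dᵀ) i l = wstar i * wstar l := by
    intro i l
    simp only [Matrix.mul_apply, Matrix.transpose_apply, hDdef, Matrix.of_apply]
    have h : ∑ j, (wstar i * Q j kk) * (wstar l * Q j kk)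
        = (wstar i * wstar l) * ∑ j, Q j kk ^ 2 := by
      rw [Finset.mul_sum]
      exact Finset.sum_congr rfl fun j _ => by ring
    rw [h, hq, mul_one]
  have hA : mip (Us * Usᵀ) (D * Dᵀ) = 0 := by
    rw [mip_eq_trace]
    have h : (Us * Usᵀ)ᵀ * (D * Dᵀ) = Us * ((Usᵀ * D) * Dᵀ) := by
      simp [Matrix.transpose_mul, Matrix.mul_assoc]
    rw [h, hUD, Matrix.zero_mul, Matrix.mul_zero, Matrix.trace_zero]
  have hv : ∀ i, ∑ l, X i l * wstar l = lamstar * wstar i := by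
    intro i
    have := congrFun hweig i
    simpa [Matrix.mulVec, dotProduct, smul_eq_mul] using this
  have hB : mip X (D * Dᵀ) = lamstar := by
    rw [mip]
    simp_rw [hDDt]
    have h : ∀ i, ∑ l, X i l * (wstar i * wstar l) = wstar i * ∑ l, X i l * wstar l := by
      intro i; rw [Finset.mul_sum]; exact Finset.sum_congr rfl fun l _ => by ring
    simp_rw [h, hv]
    have h2 : ∀ i, wstar i * (lamstar * wstar i) = lamstar * wstar i ^ 2 := fun i => by ring
    simp_rw [h2, ← Finset.mul_sum, hwunit, mul_one]
  have hterm2 : mip (Us * Usᵀ - X) (D * Dᵀ) = -lamstar := by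
    have h : mip (Us * Usᵀ - X) (D * Dᵀ)
        = mip (Us * Usᵀ) (D * Dᵀ) - mip X (D * Dᵀ) := by
      simp [mip, Matrix.sub_apply, sub_mul, Finset.sum_sub_distrib]
    rw [h, hA, hB, zero_sub]
  -- numeric bound
  have hchain : lams kk ≤ lam kr / 12 := le_trans hlamsk hgap
  have hmain : (1 / 2) * frob (Us * Dᵀ + D * Usᵀ) ^ 2 + mip (Us * Usᵀ - X) (D * Dᵀ)
      ≤ -0.91 * lam kr := by
    rw [hterm1, hterm2]
    have := hpos kr
    nlinarith [hlamstar, hchain]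
  refine ⟨hDU, hUD, hfrobD, hmain, ?_⟩
  have hmem : (1 / 2) * frob (Us * Dᵀ + D * Usᵀ) ^ 2 + mip (Us * Usᵀ - X) (D * Dᵀ)
      ∈ {t : ℝ | ∃ E : Matrix (Fin N) (Fin k) ℝ, Eᵀ * Us = Usᵀ * E ∧ frob E = 1 ∧
        t = (1 / 2) * frob (Us * Eᵀ + E * Usᵀ) ^ 2 + mip (Us * Usᵀ - X) (E * Eᵀ)} :=
    ⟨D, by rw [hDU, hUD], hfrobD, rfl⟩
  exact le_trans (csInf_le (hess_bddBelow X Us) hmem) hmain
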